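/- Let (X, α) be a PNTS with X finite. An equivalence relation E on X is a UE-bisimulation if and only if for all (x,y) ∈ E: for every μ in the closed convex hull of α(x) there exists ν in the closed convex hull of α(y) with μ =_E ν, and vice versa. -/

import Mathlib

def IsDist {X : Type*} [Fintype X] (μ : X → ℝ) : Prop :=
  (∀ x, 0 ≤ μ x) ∧ ∑ x, μ x = 1

def EqMod {X : Type*} [Fintype X] (E : X → X → Prop) (μ ν : X → ℝ) : Prop :=
  ∀ A : Finset X, (∀ x ∈ A, ∀ y, E x y → y ∈ A) → (∑ x ∈ A, μ x) = ∑ x ∈ A, ν x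

def IsUEBisim {X : Type*} [Fintype X] (α : X → Set (X → ℝ)) (E : X → X → Prop) : Prop :=
  Equivalence E ∧ ∀ x y, E x y →
    ∀ f : X → ℝ, (∀ a b, E a b → f a = f b) →
      (⨆ μ ∈ α x, ∑ z, μ z * f z) = ⨆ ν ∈ α y, ∑ z, ν z * f z

open Finset

section Aux

variable {X : Type*} [Fintype X]

open scoped Classical

noncomputable def expL (f : X → ℝ) : (X → ℝ) →ₗ[ℝ] ℝ where
  toFun μ := ∑ z, μ z * f z
  map_add' μ ν := by simp [add_mul, Finset.sum_add_distrib]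
  map_smul' c μ := by simp [Finset.mul_sum, mul_assoc]

noncomputable def expCL (f : X → ℝ) : (X → ℝ) →L[ℝ] ℝ :=
  LinearMap.toContinuousLinearMap (expL f)

@[simp] lemma expCL_apply (f μ : X → ℝ) : expCL f μ = ∑ z, μ z * f z := by
  simp [expCL, expL]

noncomputable def prL (E : X → X → Prop) : (X → ℝ) →ₗ[ℝ] (X → ℝ) where
  toFun μ := fun z => (((Finset.univ.filter fun w => E z w).card : ℝ))⁻¹ *
      ∑ w ∈ Finset.univ.filter fun w => E z w, μ w
  map_add' μ ν := by
    funext z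
    simp [Finset.sum_add_distrib, mul_add]
  map_smul' c μ := by
    funext z
    simp only [Finset.mul_sum, Pi.smul_apply, smul_eq_mul, RingHom.id_apply]
    exact Finset.sum_congr rfl fun w _ => by ring

variable {E : X → X → Prop}

lemma class_eq (hE : Equivalence E) {a b : X} (hab : E a b) :
    (Finset.univ.filter fun w => E a w) = Finset.univ.filter fun w => E b w := by
  ext u
  simp only [Finset.mem_filter, Finset.mem_univ, true_and]
  exact ⟨fun h => hE.trans (hE.symm hab) h, fun h => hE.trans hab h⟩

lemma card_class_pos (hE : Equivalence E) (z : X) :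
    0 < ((Finset.univ.filter fun w => E z w).card : ℝ) := by
  have : z ∈ Finset.univ.filter fun w => E z w := by
    simp [hE.refl z]
  exact_mod_cast Finset.card_pos.2 ⟨z, this⟩

lemma exp_prL (hE : Equivalence E) {f : X → ℝ} (hf : ∀ a b, E a b → f a = f b) (μ : X → ℝ) :
    ∑ z, μ z * f z = ∑ z, prL E μ z * f z := by
  have hrhs : ∀ z, prL E μ z * f z =
      ∑ w, if E z w then (((Finset.univ.filter fun u => E z u).card : ℝ))⁻¹ * μ w * f z else 0 := by
    intro z
    simp only [prL, LinearMap.coe_mk, AddHom.coe_mk]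
    rw [← Finset.sum_filter, Finset.mul_sum, Finset.sum_mul]
  rw [Finset.sum_congr rfl fun z _ => hrhs z, Finset.sum_comm]
  refine Finset.sum_congr rfl fun w _ => ?_
  rw [← Finset.sum_filter]
  have h1 : ∀ z ∈ Finset.univ.filter fun z => E z w,
      (((Finset.univ.filter fun u => E z u).card : ℝ))⁻¹ * μ w * f z =
      (((Finset.univ.filter fun u => E w u).card : ℝ))⁻¹ * μ w * f w := by
    intro z hz
    have hzw : E z w := by simpa using hz
    rw [class_eq hE hzw, hf z w hzw]
  rw [Finset.sum_congr rfl h1, Finset.sum_const, nsmul_eq_mul]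
  have hsets : (Finset.univ.filter fun z => E z w) = Finset.univ.filter fun z => E w z := by
    ext u; simp only [Finset.mem_filter, Finset.mem_univ, true_and]
    exact ⟨fun h => hE.symm h, fun h => hE.symm h⟩
  rw [hsets]
  have hpos := card_class_pos hE w
  field_simp

lemma mass_prL (hE : Equivalence E) (ρ : X → ℝ) : ∑ z, prL E ρ z = ∑ z, ρ z := by
  have := exp_prL hE (f := fun _ => (1:ℝ)) (fun _ _ _ => rfl) ρ
  simpa using this.symm

lemma prL_eq_of_eqMod (hE : Equivalence E) {μ ν : X → ℝ} (h : EqMod E μ ν) :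
    prL E μ = prL E ν := by
  funext z
  simp only [prL, LinearMap.coe_mk, AddHom.coe_mk]
  congr 1
  refine h _ fun a ha b hab => ?_
  simp only [Finset.mem_filter, Finset.mem_univ, true_and] at ha ⊢
  exact hE.trans ha hab

lemma eqMod_of_prL_eq (hE : Equivalence E) {μ ν : X → ℝ} (h : prL E μ = prL E ν) :
    EqMod E μ ν := by
  intro A hA
  set f : X → ℝ := fun z => if z ∈ A then (1:ℝ) else 0 with hfdef
  have hf : ∀ a b, E a b → f a = f b := by
    intro a b hab
    by_cases ha : a ∈ A
    · simp [hfdef, ha, hA a ha b hab]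
    · have hb : b ∉ A := fun hb => ha (hA b hb a (hE.symm hab))
      simp [hfdef, ha, hb]
  have key : ∀ ρ : X → ℝ, ∑ z, ρ z * f z = ∑ x ∈ A, ρ x := by
    intro ρ
    have h2 : ∀ z ∈ Finset.univ, ρ z * f z = if z ∈ A then ρ z else 0 := by
      intro z _
      by_cases hz : z ∈ A <;> simp [hfdef, hz]
    rw [Finset.sum_congr rfl h2, Fintype.sum_ite_mem]
  rw [← key μ, ← key ν, exp_prL hE hf μ, exp_prL hE hf ν, h]

lemma linfun_repr (L : (X → ℝ) →ₗ[ℝ] ℝ) (μ : X → ℝ) :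
    L μ = ∑ z, μ z * L (Pi.single z 1) := by
  have hrepr : μ = ∑ z, μ z • (Pi.single z (1:ℝ) : X → ℝ) := by
    funext j
    rw [Finset.sum_apply]
    simp only [Pi.smul_apply, Pi.single_apply, smul_eq_mul, mul_ite, mul_one, mul_zero]
    rw [Finset.sum_ite_eq Finset.univ j (fun z => μ z)]
    simp
  conv_lhs => rw [hrepr]
  rw [map_sum]
  exact Finset.sum_congr rfl fun z _ => by rw [map_smul, smul_eq_mul]

lemma prL_single_inv (hE : Equivalence E) {a b : X} (hab : E a b) :
    prL E (Pi.single a (1:ℝ)) = prL E (Pi.single b (1:ℝ)) := by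
  funext z
  simp only [prL, LinearMap.coe_mk, AddHom.coe_mk]
  congr 1
  rw [Finset.sum_pi_single', Finset.sum_pi_single']
  have : (a ∈ Finset.univ.filter fun w => E z w) ↔ (b ∈ Finset.univ.filter fun w => E z w) := by
    simp only [Finset.mem_filter, Finset.mem_univ, true_and]
    exact ⟨fun h => hE.trans h hab, fun h => hE.trans h (hE.symm hab)⟩
  simp [this]

/-! ### half spaces and the closed convex hull -/

lemma le_on_hull (L : (X → ℝ) →L[ℝ] ℝ) {s : Set (X → ℝ)} {c : ℝ}
    (h : ∀ ρ ∈ s, L ρ ≤ c) {μ : X → ℝ} (hμ : μ ∈ closure (convexHull ℝ s)) : L μ ≤ c := by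
  have hsub : closure (convexHull ℝ s) ⊆ {v | L v ≤ c} :=
    closure_minimal
      (convexHull_min h (convex_halfSpace_le (LinearMap.isLinear L.toLinearMap) c))
      (isClosed_le L.continuous continuous_const)
  exact hsub hμ

lemma hull_subset_simplex {s : Set (X → ℝ)} (h : ∀ μ ∈ s, IsDist μ) :
    closure (convexHull ℝ s) ⊆ stdSimplex ℝ X :=
  closure_minimal
    (convexHull_min (fun μ hμ => h μ hμ) (convex_stdSimplex ℝ X))
    (isCompact_stdSimplex ℝ X).isClosed

lemma hull_compact {s : Set (X → ℝ)} (h : ∀ μ ∈ s, IsDist μ) :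
    IsCompact (closure (convexHull ℝ s)) :=
  (isCompact_stdSimplex ℝ X).of_isClosed_subset isClosed_closure (hull_subset_simplex h)

/-! ### expectation bounds and suprema -/

lemma exp_le_bound {f μ : X → ℝ} (hμ : IsDist μ) : ∑ z, μ z * f z ≤ ∑ z, |f z| := by
  refine Finset.sum_le_sum fun z _ => ?_
  have h1 : μ z ≤ 1 := by
    have := Finset.single_le_sum (f := μ) (fun i _ => hμ.1 i) (Finset.mem_univ z)
    rw [hμ.2] at this
    exact this
  calc μ z * f z ≤ μ z * |f z| := mul_le_mul_of_nonneg_left (le_abs_self _) (hμ.1 z)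
    _ ≤ |f z| := mul_le_of_le_one_left (abs_nonneg _) h1

lemma biSup_le_of {Y : Type*} [Nonempty Y] {s : Set Y} {F : Y → ℝ} {r : ℝ}
    (h : ∀ a ∈ s, F a ≤ r) (h0 : 0 ≤ r) : (⨆ a ∈ s, F a) ≤ r :=
  ciSup_le fun a => Real.iSup_le (fun ha => h a ha) h0

lemma le_biSup_of {Y : Type*} {s : Set Y} {F : Y → ℝ} {M : ℝ}
    (hM : ∀ a ∈ s, F a ≤ M) {a : Y} (ha : a ∈ s) : F a ≤ ⨆ b ∈ s, F b := by
  have hbdd : BddAbove (Set.range fun b => ⨆ _ : b ∈ s, F b) := by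
    refine ⟨max 0 M, ?_⟩
    rintro _ ⟨b, rfl⟩
    exact Real.iSup_le (fun hb => (hM b hb).trans (le_max_right _ _)) (le_max_left _ _)
  refine le_trans ?_ (le_ciSup hbdd a)
  exact (ciSup_pos (f := fun _ : a ∈ s => F a) ha).ge

lemma biSup_nonneg_of {Y : Type*} {s : Set Y} {F : Y → ℝ} {M : ℝ}
    (hM : ∀ a ∈ s, F a ≤ M) {b : Y} (hb : b ∉ s) : 0 ≤ ⨆ a ∈ s, F a := by
  have hbdd : BddAbove (Set.range fun c => ⨆ _ : c ∈ s, F c) := by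
    refine ⟨max 0 M, ?_⟩
    rintro _ ⟨c, rfl⟩
    exact Real.iSup_le (fun hc => (hM c hc).trans (le_max_right _ _)) (le_max_left _ _)
  have h0 : (⨆ _ : b ∈ s, F b) = 0 := by
    haveI : IsEmpty (b ∈ s) := ⟨hb⟩
    exact Real.iSup_of_isEmpty _
  calc (0:ℝ) = ⨆ _ : b ∈ s, F b := h0.symm
    _ ≤ ⨆ c, ⨆ _ : c ∈ s, F c := le_ciSup hbdd b

lemma zero_not_dist {s : Set (X → ℝ)} (h : ∀ μ ∈ s, IsDist μ) : (0 : X → ℝ) ∉ s := by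
  intro h0
  have := (h 0 h0).2
  simp at this

/-! ### the two directions -/

lemma sup_le_aux (hE : Equivalence E) {sx sy : Set (X → ℝ)}
    (hdx : ∀ μ ∈ sx, IsDist μ) (hdy : ∀ μ ∈ sy, IsDist μ)
    (hmatch : ∀ μ ∈ closure (convexHull ℝ sx), ∃ ν ∈ closure (convexHull ℝ sy), EqMod E μ ν)
    {f : X → ℝ} (hf : ∀ a b, E a b → f a = f b) :
    (⨆ μ ∈ sx, ∑ z, μ z * f z) ≤ ⨆ ν ∈ sy, ∑ z, ν z * f z := by
  refine biSup_le_of ?_ ?_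
  · intro μ hμ
    obtain ⟨ν, hν, hEq⟩ := hmatch μ (subset_closure (subset_convexHull ℝ _ hμ))
    have heq : ∑ z, μ z * f z = ∑ z, ν z * f z := by
      rw [exp_prL hE hf μ, exp_prL hE hf ν, prL_eq_of_eqMod hE hEq]
    rw [heq]
    have hle : expCL f ν ≤ ⨆ ν ∈ sy, ∑ z, ν z * f z := by
      refine le_on_hull (expCL f) (fun ρ hρ => ?_) hν
      rw [expCL_apply]
      exact le_biSup_of (F := fun ν => ∑ z, ν z * f z) (fun a ha => exp_le_bound (μ := a) (hdy a ha)) hρ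
    rwa [expCL_apply] at hle
  · exact biSup_nonneg_of (fun a ha => exp_le_bound (hdy a ha)) (zero_not_dist hdy)

lemma hard_aux (hE : Equivalence E) (α : X → Set (X → ℝ))
    (hdist : ∀ x, ∀ μ ∈ α x, IsDist μ)
    (hb : ∀ x y, E x y → ∀ f : X → ℝ, (∀ a b, E a b → f a = f b) →
      (⨆ μ ∈ α x, ∑ z, μ z * f z) = ⨆ ν ∈ α y, ∑ z, ν z * f z)
    {x y : X} (hxy : E x y) {μ : X → ℝ} (hμ : μ ∈ closure (convexHull ℝ (α x))) :
    ∃ ν ∈ closure (convexHull ℝ (α y)), EqMod E μ ν := by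
  set Ky := closure (convexHull ℝ (α y)) with hKy
  have hcont : Continuous (prL E : (X → ℝ) →ₗ[ℝ] (X → ℝ)) :=
    LinearMap.continuous_of_finiteDimensional _
  set S : Set (X → ℝ) := (prL E) '' Ky with hS
  have hSconv : Convex ℝ S :=
    Convex.linear_image ((convex_convexHull ℝ _).closure) (prL E)
  have hScomp : IsCompact S := (hull_compact (hdist y)).image hcont
  by_cases hmem : prL E μ ∈ S
  · obtain ⟨ν, hν, hνeq⟩ := hmem
    exact ⟨ν, hν, eqMod_of_prL_eq hE hνeq.symm⟩
  · exfalso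
    obtain ⟨F, u, hFu, huF⟩ :=
      geometric_hahn_banach_closed_point hSconv hScomp.isClosed hmem
    set t : ℝ := max 0 (-u) with ht
    set G : (X → ℝ) →L[ℝ] ℝ := F + t • expCL (fun _ => (1:ℝ)) with hG
    have hGval : ∀ ρ : X → ℝ, G (prL E ρ) = F (prL E ρ) + t * ∑ z, ρ z := by
      intro ρ
      have h1 : (∑ z, prL E ρ z * (1:ℝ)) = ∑ z, ρ z := by
        simpa using mass_prL hE ρ
      have h2 : G (prL E ρ) = F (prL E ρ) + t * ∑ z, prL E ρ z * (1:ℝ) := by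
        simp [hG]
      rw [h2, h1]
    set g : X → ℝ := fun z => G (prL E (Pi.single z 1)) with hg
    have hginv : ∀ a b, E a b → g a = g b := by
      intro a b hab
      simp only [hg]
      rw [prL_single_inv hE hab]
    have hrepr : ∀ ρ : X → ℝ, G (prL E ρ) = ∑ z, ρ z * g z := by
      intro ρ
      have := linfun_repr ((G : (X → ℝ) →L[ℝ] ℝ).toLinearMap.comp (prL E)) ρ
      simpa using this
    set u' : ℝ := u + t with hu'
    have h0u' : 0 ≤ u' := by
      have := le_max_right (0:ℝ) (-u)
      simp only [hu', ht]
      linarith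
    have hub_y : ∀ ρ ∈ α y, ∑ z, ρ z * g z ≤ u' := by
      intro ρ hρ
      have hρK : ρ ∈ Ky := subset_closure (subset_convexHull ℝ _ hρ)
      have h2 : F (prL E ρ) < u := hFu _ ⟨ρ, hρK, rfl⟩
      have h3 : ∑ z, ρ z = 1 := (hull_subset_simplex (hdist y) hρK).2
      calc ∑ z, ρ z * g z = G (prL E ρ) := (hrepr ρ).symm
        _ = F (prL E ρ) + t * ∑ z, ρ z := hGval ρ
        _ = F (prL E ρ) + t := by rw [h3, mul_one]
        _ ≤ u' := by simp only [hu']; linarith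
    have hsup : (⨆ ν ∈ α y, ∑ z, ν z * g z) ≤ u' := biSup_le_of hub_y h0u'
    have hub_x : ∀ ρ ∈ α x, ∑ z, ρ z * g z ≤ u' := by
      intro ρ hρ
      calc ∑ z, ρ z * g z ≤ ⨆ μ ∈ α x, ∑ z, μ z * g z :=
            le_biSup_of (F := fun μ => ∑ z, μ z * g z) (fun a ha => exp_le_bound (μ := a) (hdist x a ha)) hρ
        _ = ⨆ ν ∈ α y, ∑ z, ν z * g z := hb x y hxy g hginv
        _ ≤ u' := hsup
    have hμle : expCL g μ ≤ u' := by
      refine le_on_hull (expCL g) (fun ρ hρ => ?_) hμ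
      rw [expCL_apply]
      exact hub_x ρ hρ
    rw [expCL_apply] at hμle
    have hmassμ : ∑ z, μ z = 1 := (hull_subset_simplex (hdist x) hμ).2
    have hgt : ∑ z, μ z * g z = F (prL E μ) + t := by
      rw [← hrepr μ, hGval μ, hmassμ, mul_one]
    rw [hgt] at hμle
    simp only [hu'] at hμle
    linarith

end Aux

theorem stmt_15 {X : Type*} [Fintype X] (α : X → Set (X → ℝ))
    (hdist : ∀ x, ∀ μ ∈ α x, IsDist μ)
    (E : X → X → Prop) (hE : Equivalence E) :
    IsUEBisim α E ↔
      ∀ x y, E x y →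
        (∀ μ ∈ closure (convexHull ℝ (α x)),
          ∃ ν ∈ closure (convexHull ℝ (α y)), EqMod E μ ν) ∧
        (∀ ν ∈ closure (convexHull ℝ (α y)),
          ∃ μ ∈ closure (convexHull ℝ (α x)), EqMod E μ ν) := by
  constructor
  · rintro ⟨hE', hb⟩ x y hxy
    constructor
    · intro μ hμ
      exact hard_aux hE' α hdist hb hxy hμ
    · intro ν hν
      obtain ⟨μ, hμ, hEq⟩ := hard_aux hE' α hdist hb (hE'.symm hxy) hν
      exact ⟨μ, hμ, fun A hA => (hEq A hA).symm⟩
  · intro hmatch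
    refine ⟨hE, fun x y hxy f hf => ?_⟩
    refine le_antisymm ?_ ?_
    · exact sup_le_aux hE (hdist x) (hdist y) (fun μ hμ => (hmatch x y hxy).1 μ hμ) hf
    · refine sup_le_aux hE (hdist y) (hdist x) (fun ν hν => ?_) hf
      obtain ⟨μ, hμ, hEq⟩ := (hmatch x y hxy).2 ν hν
      exact ⟨μ, hμ, fun A hA => (hEq A hA).symm⟩
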